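/- Let p₁, p₂ be real numbers with p₁ + p₂ ≠ 2, set b = p₁ + p₂ − 1, and let M be the 2×2 real matrix with rows (p₁, 1−p₁) and (1−p₂, p₂). Then for every real x, exp(x·M) equals (2 − p₁ − p₂)⁻¹ times the 2×2 matrix with rows ( (1−p₂)·eˣ + (1−p₁)·e^{bx} , (1−p₁)·(eˣ − e^{bx}) ) and ( (1−p₂)·(eˣ − e^{bx}) , (1−p₁)·eˣ + (1−p₂)·e^{bx} ). -/

import Mathlib

open Matrix

lemma diag_fin_two (a b : ℝ) :
    Matrix.diagonal ![a, b] = !![a, 0; 0, b] := by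
  ext i j
  fin_cases i <;> fin_cases j <;> simp [Matrix.diagonal]

/-- Explicit formula for the exponential of a `2×2` matrix with rows `(p₁, 1−p₁)` and
`(1−p₂, p₂)`, where `b = p₁ + p₂ − 1` and `p₁ + p₂ ≠ 2`. -/
theorem stmt10 (p₁ p₂ : ℝ) (h : p₁ + p₂ ≠ 2) (x : ℝ) :
    NormedSpace.exp (x • (!![p₁, 1 - p₁; 1 - p₂, p₂] : Matrix (Fin 2) (Fin 2) ℝ)) =
      (2 - p₁ - p₂)⁻¹ •
        !![(1 - p₂) * Real.exp x + (1 - p₁) * Real.exp ((p₁ + p₂ - 1) * x),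
             (1 - p₁) * (Real.exp x - Real.exp ((p₁ + p₂ - 1) * x));
           (1 - p₂) * (Real.exp x - Real.exp ((p₁ + p₂ - 1) * x)),
             (1 - p₁) * Real.exp x + (1 - p₂) * Real.exp ((p₁ + p₂ - 1) * x)] := by
  have hc : (2 - p₁ - p₂) ≠ 0 := by intro hc; apply h; linarith
  set U : Matrix (Fin 2) (Fin 2) ℝ := !![1, 1 - p₁; 1, p₂ - 1] with hU
  set V : Matrix (Fin 2) (Fin 2) ℝ :=
    (2 - p₁ - p₂)⁻¹ • !![1 - p₂, 1 - p₁; 1, -1] with hV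
  have hUV : U * V = 1 := by
    ext i j
    fin_cases i <;> fin_cases j <;>
      simp [hU, hV, Matrix.mul_apply, Fin.sum_univ_two] <;> field_simp <;> ring
  have hVU : V * U = 1 := by
    ext i j
    fin_cases i <;> fin_cases j <;>
      simp [hU, hV, Matrix.mul_apply, Fin.sum_univ_two] <;> field_simp <;> ring
  have hUunit : IsUnit U := ⟨⟨U, V, hUV, hVU⟩, rfl⟩
  have hUinv : U⁻¹ = V := inv_eq_right_inv hUV
  have key : x • (!![p₁, 1 - p₁; 1 - p₂, p₂] : Matrix (Fin 2) (Fin 2) ℝ)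
      = U * (Matrix.diagonal ![x, (p₁ + p₂ - 1) * x]) * U⁻¹ := by
    rw [hUinv, diag_fin_two]
    ext i j
    fin_cases i <;> fin_cases j <;>
      · simp [hU, hV, Matrix.mul_apply, Fin.sum_univ_two]
        field_simp
        ring
  rw [key, Matrix.exp_conj U _ hUunit, Matrix.exp_diagonal, hUinv]
  have hexp : (NormedSpace.exp (![x, (p₁ + p₂ - 1) * x] : Fin 2 → ℝ))
      = ![Real.exp x, Real.exp ((p₁ + p₂ - 1) * x)] := by
    rw [Pi.exp_def]
    funext i
    fin_cases i <;> simp [Real.exp_eq_exp_ℝ]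
  rw [hexp, diag_fin_two]
  ext i j
  fin_cases i <;> fin_cases j <;>
    · simp [hU, hV, Matrix.mul_apply, Fin.sum_univ_two]
      field_simp
      all_goals ring
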